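/- arXiv:2105.10597 — 2 statements merged into one kernel-verified Lean document; each statement's English description precedes it below -/
import Mathlib

section
/- Suppose κ₂ > 0, κ₄ > 0, κ₃ < 1, μ_A > 0, and suppose that ℓ̲_B ∈ I_{κ₁,κ₂} (i.e. κ₁ · Φ_{B→A}(κ₂ ℓ̲_B) < 1). Then for the linear mean-field system (λ^A, λ^B), the pair (ℓ̲_B, ℓ̄_B) belongs to U_Φ; in particular ℓ̄_B < ∞, Φ(ℓ̄_B) ≤ ℓ̲_B ≤ ℓ ≤ ℓ̄_B ≤ Φ(ℓ̲_B), and μ_B/(1−κ₃) ≤ ℓ̲_B. -/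
open MeasureTheory Filter Topology Set
open scoped ENNReal

/-- Convolution term `∫₀ᵗ h(t-u) f(u) du`. -/
noncomputable def convK (h f : ℝ → ℝ) (t : ℝ) : ℝ :=
  ∫ u in (0:ℝ)..t, h (t - u) * f u

/-- `L¹` norm on `[0,∞)` of a kernel. -/
noncomputable def l1 (h : ℝ → ℝ) : ℝ :=
  ∫ s in Set.Ioi (0:ℝ), h s

/-- A nonnegative measurable kernel with finite `L¹` norm on `[0,∞)`. -/
def KernelL1 (h : ℝ → ℝ) : Prop :=
  Measurable h ∧ (∀ u, 0 ≤ u → 0 ≤ h u) ∧ IntegrableOn h (Set.Ioi 0)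

/-- A nonnegative integrable kernel vanishing at infinity. -/
def KernelOK (h : ℝ → ℝ) : Prop :=
  KernelL1 h ∧ Tendsto h atTop (𝓝 0)

/-- Properties of the inhibition kernel `Φ_{B→A}`. -/
def InhibOK (Φ : ℝ → ℝ) : Prop :=
  (∃ K, 0 ≤ K ∧ ∀ x y, 0 ≤ x → 0 ≤ y → |Φ x - Φ y| ≤ K * |x - y|) ∧
  AntitoneOn Φ (Set.Ici 0) ∧ Φ 0 = 1 ∧
  (∀ x, 0 ≤ x → 0 ≤ Φ x ∧ Φ x ≤ 1) ∧
  Tendsto Φ atTop (𝓝 0)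

/-- Properties of the feedback kernel `Φ_{A→B}`. -/
def FeedOK (Φ : ℝ → ℝ) : Prop :=
  (∃ K, 0 ≤ K ∧ ∀ x y, 0 ≤ x → 0 ≤ y → |Φ x - Φ y| ≤ K * |x - y|) ∧
  MonotoneOn Φ (Set.Ici 0) ∧ Φ 0 = 0 ∧
  (∀ x, 0 ≤ x → 0 ≤ Φ x) ∧
  Tendsto Φ atTop atTop

/-- The general mean-field system of intensities. -/
def IsGenSys (α : ℝ) (h₁ h₂ h₃ h₄ ΦA ΦB ΦBA ΦAB lA lB : ℝ → ℝ) : Prop :=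
  Continuous lA ∧ Continuous lB ∧ (∀ t, 0 ≤ lA t) ∧ (∀ t, 0 ≤ lB t) ∧
  (∀ t, 0 ≤ t →
    lA t = ΦA (α * convK h₁ lA t) * ΦBA ((1 - α) * convK h₂ lB t)) ∧
  (∀ t, 0 ≤ t →
    lB t = ΦB ((1 - α) * convK h₃ lB t) + ΦAB (α * convK h₄ lA t))

/-- The linear mean-field system: `Φ_A(x) = μ_A + x` and `Φ_B(x) = μ_B + x`. -/
def IsLinSys (α : ℝ) (h₁ h₂ h₃ h₄ ΦBA ΦAB : ℝ → ℝ) (μA μB : ℝ)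
    (lA lB : ℝ → ℝ) : Prop :=
  IsGenSys α h₁ h₂ h₃ h₄ (fun x => μA + x) (fun x => μB + x) ΦBA ΦAB lA lB

/-- `limsup_{t→∞} f(t)` with values in `[0,∞]`. -/
noncomputable def elimsup (f : ℝ → ℝ) : ℝ≥0∞ :=
  Filter.limsup (fun t => ENNReal.ofReal (f t)) Filter.atTop

/-- `liminf_{t→∞} f(t)` with values in `[0,∞]`. -/
noncomputable def eliminf (f : ℝ → ℝ) : ℝ≥0∞ :=
  Filter.liminf (fun t => ENNReal.ofReal (f t)) Filter.atTop

/-- The domain `I_{κ₁,κ₂} = {x ≥ 0 : κ₁ Φ_{B→A}(κ₂ x) < 1}`. -/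
def Idom (κ₁ κ₂ : ℝ) (ΦBA : ℝ → ℝ) : Set ℝ :=
  {x : ℝ | 0 ≤ x ∧ κ₁ * ΦBA (κ₂ * x) < 1}

/-- `Ψ₁(x) = μ_A Φ_{B→A}(κ₂x)/(1 - κ₁Φ_{B→A}(κ₂x))`. -/
noncomputable def Psi1 (μA κ₁ κ₂ : ℝ) (ΦBA : ℝ → ℝ) (x : ℝ) : ℝ :=
  μA * ΦBA (κ₂ * x) / (1 - κ₁ * ΦBA (κ₂ * x))

/-- `Ψ₂(x) = (μ_B + Φ_{A→B}(κ₄x))/(1-κ₃)`. -/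
noncomputable def Psi2 (μB κ₃ κ₄ : ℝ) (ΦAB : ℝ → ℝ) (x : ℝ) : ℝ :=
  (μB + ΦAB (κ₄ * x)) / (1 - κ₃)

/-- The fixed-point map `Φ = Ψ₂ ∘ Ψ₁`. -/
noncomputable def PhiMap (μA μB κ₁ κ₂ κ₃ κ₄ : ℝ) (ΦBA ΦAB : ℝ → ℝ) (x : ℝ) : ℝ :=
  Psi2 μB κ₃ κ₄ ΦAB (Psi1 μA κ₁ κ₂ ΦBA x)

/-- The set `U_Φ` of admissible pairs `(u,v)`. -/
def UPhi (μA μB κ₁ κ₂ κ₃ κ₄ : ℝ) (ΦBA ΦAB : ℝ → ℝ) (ℓ : ℝ) : Set (ℝ × ℝ) :=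
  {p : ℝ × ℝ | p.1 ∈ Idom κ₁ κ₂ ΦBA ∧ p.2 ∈ Idom κ₁ κ₂ ΦBA ∧
    PhiMap μA μB κ₁ κ₂ κ₃ κ₄ ΦBA ΦAB p.2 ≤ p.1 ∧ p.1 ≤ ℓ ∧ ℓ ≤ p.2 ∧
    p.2 ≤ PhiMap μA μB κ₁ κ₂ κ₃ κ₄ ΦBA ΦAB p.1 ∧ μB / (1 - κ₃) ≤ p.1}

section ConvHelpers

variable {h f : ℝ → ℝ}

lemma kII' (hk : KernelL1 h) {x y : ℝ} (hx : 0 ≤ x) (hxy : x ≤ y) :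
    IntervalIntegrable h volume x y := by
  rw [intervalIntegrable_iff_integrableOn_Ioc_of_le hxy]
  exact hk.2.2.mono_set (fun u hu => lt_of_le_of_lt hx hu.1)

lemma kII_sub (hk : KernelL1 h) {t a b : ℝ} (hbt : b ≤ t) (hab : a ≤ b) :
    IntervalIntegrable (fun u => h (t - u)) volume a b := by
  have h1 : IntervalIntegrable h volume (t - b) (t - a) :=
    kII' hk (by linarith) (by linarith)
  have := h1.comp_sub_left t
  simpa using this.symm

lemma kII_conv (hk : KernelL1 h) (hf : Continuous f) {t a b : ℝ} (hbt : b ≤ t) (hab : a ≤ b) :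
    IntervalIntegrable (fun u => h (t - u) * f u) volume a b :=
  (kII_sub hk hbt hab).mul_continuousOn hf.continuousOn

lemma int_kernel_le_l1 (hk : KernelL1 h) {x y : ℝ} (hx : 0 ≤ x) (hxy : x ≤ y) :
    (∫ u in x..y, h u) ≤ l1 h := by
  rw [intervalIntegral.integral_of_le hxy]
  exact setIntegral_mono_set hk.2.2
    ((ae_restrict_iff' measurableSet_Ioi).2 (ae_of_all _ fun u hu => hk.2.1 u hu.le))
    (HasSubset.Subset.eventuallyLE (fun u hu => lt_of_le_of_lt hx hu.1))

lemma l1_nonneg (hk : KernelL1 h) : 0 ≤ l1 h :=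
  setIntegral_nonneg measurableSet_Ioi (fun u hu => hk.2.1 u hu.le)

lemma tendsto_int_kernel (hk : KernelL1 h) (T : ℝ) :
    Tendsto (fun t => ∫ u in (0:ℝ)..(t - T), h u) atTop (𝓝 (l1 h)) :=
  intervalIntegral_tendsto_integral_Ioi 0 hk.2.2 (tendsto_atTop_add_const_right _ (-T) tendsto_id)

lemma conv_nonneg (hk : KernelL1 h) (hf0 : ∀ u, 0 ≤ f u) {t : ℝ} (ht : 0 ≤ t) :
    0 ≤ convK h f t :=
  intervalIntegral.integral_nonneg ht
    (fun u hu => mul_nonneg (hk.2.1 _ (by linarith [hu.2])) (hf0 u))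

lemma int_sub_eq (t a b : ℝ) :
    (∫ u in a..b, h (t - u)) = ∫ s in (t - b)..(t - a), h s :=
  intervalIntegral.integral_comp_sub_left h t

lemma conv_le_mul (hk : KernelL1 h) (hf : Continuous f) {B t : ℝ}
    (hB : ∀ u ∈ Icc (0:ℝ) t, f u ≤ B) (hB0 : 0 ≤ B) (ht : 0 ≤ t) :
    convK h f t ≤ B * l1 h := by
  have step1 : convK h f t ≤ ∫ u in (0:ℝ)..t, h (t - u) * B := by
    apply intervalIntegral.integral_mono_on ht (kII_conv hk hf le_rfl ht)
      ((kII_sub hk le_rfl ht).mul_const B)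
    intro u hu
    exact mul_le_mul_of_nonneg_left (hB u hu) (hk.2.1 _ (by linarith [hu.2]))
  have step2 : (∫ u in (0:ℝ)..t, h (t - u) * B) = (∫ s in (0:ℝ)..t, h s) * B := by
    rw [intervalIntegral.integral_mul_const, int_sub_eq]
    norm_num
  calc convK h f t ≤ _ := step1
    _ = _ := step2
    _ ≤ l1 h * B := mul_le_mul_of_nonneg_right (int_kernel_le_l1 hk le_rfl ht) hB0
    _ = B * l1 h := mul_comm _ _

lemma conv_split (hk : KernelL1 h) (hf : Continuous f) {t T₀ : ℝ} (h0 : 0 ≤ T₀) (hT : T₀ ≤ t) :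
    convK h f t = (∫ u in (0:ℝ)..T₀, h (t - u) * f u) + ∫ u in T₀..t, h (t - u) * f u :=
  (intervalIntegral.integral_add_adjacent_intervals
    (kII_conv hk hf (by linarith) h0) (kII_conv hk hf le_rfl hT)).symm

lemma conv_ge_eventually (hk : KernelL1 h) (hf : Continuous f) (hf0 : ∀ u, 0 ≤ f u)
    {r T₀ : ℝ} (hT₀ : 0 ≤ T₀) (hev : ∀ u, T₀ ≤ u → r ≤ f u)
    {ε : ℝ} (hε : 0 < ε) :
    ∀ᶠ t in atTop, r * l1 h - ε ≤ convK h f t := by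
  have htd : ∀ᶠ t in atTop, r * l1 h - ε < r * ∫ u in (0:ℝ)..(t - T₀), h u := by
    apply ((tendsto_int_kernel hk T₀).const_mul r).eventually_const_lt
    nlinarith [l1_nonneg hk]
  filter_upwards [eventually_ge_atTop T₀, htd] with t ht1 ht2
  have h1 : (0:ℝ) ≤ ∫ u in (0:ℝ)..T₀, h (t - u) * f u :=
    intervalIntegral.integral_nonneg hT₀
      (fun u hu => mul_nonneg (hk.2.1 _ (by linarith [hu.2])) (hf0 u))
  have h2 : r * (∫ u in (0:ℝ)..(t - T₀), h u) ≤ ∫ u in T₀..t, h (t - u) * f u := by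
    have e1 : (∫ u in T₀..t, h (t - u) * r) = r * ∫ u in (0:ℝ)..(t - T₀), h u := by
      rw [intervalIntegral.integral_mul_const, int_sub_eq]
      simp [mul_comm]
    rw [← e1]
    apply intervalIntegral.integral_mono_on ht1 ((kII_sub hk le_rfl ht1).mul_const r)
      (kII_conv hk hf le_rfl ht1)
    intro u hu
    exact mul_le_mul_of_nonneg_left (hev u hu.1) (hk.2.1 _ (by linarith [hu.2]))
  have := conv_split hk hf hT₀ ht1
  linarith

lemma conv_le_eventually (hk : KernelL1 h) (hf : Continuous f) (hf0 : ∀ u, 0 ≤ f u)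
    {B S T₀ : ℝ} (hB : ∀ u, 0 ≤ u → f u ≤ B) (hS : 0 ≤ S) (hT₀ : 0 ≤ T₀)
    (hub : ∀ u, T₀ ≤ u → f u ≤ S) {ε : ℝ} (hε : 0 < ε) :
    ∀ᶠ t in atTop, convK h f t ≤ S * l1 h + ε := by
  have hB0 : 0 ≤ B := le_trans (hf0 0) (hB 0 le_rfl)
  have htail : Tendsto (fun t => ((∫ u in (0:ℝ)..(t - 0), h u) - ∫ u in (0:ℝ)..(t - T₀), h u) * B)
      atTop (𝓝 0) := by
    have := ((tendsto_int_kernel hk 0).sub (tendsto_int_kernel hk T₀)).mul_const B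
    simpa using this
  have htd : ∀ᶠ t in atTop,
      ((∫ u in (0:ℝ)..(t - 0), h u) - ∫ u in (0:ℝ)..(t - T₀), h u) * B < ε :=
    htail.eventually_lt_const hε
  filter_upwards [eventually_ge_atTop T₀, htd] with t ht1 ht2
  have h1 : (∫ u in (0:ℝ)..T₀, h (t - u) * f u) ≤
      ((∫ u in (0:ℝ)..(t - 0), h u) - ∫ u in (0:ℝ)..(t - T₀), h u) * B := by
    have e1 : (∫ u in (0:ℝ)..T₀, h (t - u) * B) =
        ((∫ u in (0:ℝ)..(t - 0), h u) - ∫ u in (0:ℝ)..(t - T₀), h u) * B := by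
      rw [intervalIntegral.integral_mul_const, int_sub_eq]
      have hadj : (∫ u in (0:ℝ)..(t - T₀), h u) + (∫ u in (t - T₀)..(t - 0), h u)
          = ∫ u in (0:ℝ)..(t - 0), h u :=
        intervalIntegral.integral_add_adjacent_intervals
          (kII' hk le_rfl (by linarith)) (kII' hk (by linarith) (by linarith))
      have e2 : (∫ u in (t - T₀)..(t - 0), h u) =
          (∫ u in (0:ℝ)..(t - 0), h u) - ∫ u in (0:ℝ)..(t - T₀), h u := by linarith
      rw [e2]
    rw [← e1]
    apply intervalIntegral.integral_mono_on hT₀ (kII_conv hk hf (by linarith) hT₀)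
      ((kII_sub hk (by linarith) hT₀).mul_const B)
    intro u hu
    exact mul_le_mul_of_nonneg_left (hB u hu.1) (hk.2.1 _ (by linarith [hu.2]))
  have h2 : (∫ u in T₀..t, h (t - u) * f u) ≤ S * l1 h := by
    have e1 : (∫ u in T₀..t, h (t - u) * S) = (∫ u in (0:ℝ)..(t - T₀), h u) * S := by
      rw [intervalIntegral.integral_mul_const, int_sub_eq]
      simp
    have step : (∫ u in T₀..t, h (t - u) * f u) ≤ ∫ u in T₀..t, h (t - u) * S := by
      apply intervalIntegral.integral_mono_on ht1 (kII_conv hk hf le_rfl ht1)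
        ((kII_sub hk le_rfl ht1).mul_const S)
      intro u hu
      exact mul_le_mul_of_nonneg_left (hub u hu.1) (hk.2.1 _ (by linarith [hu.2]))
    calc (∫ u in T₀..t, h (t - u) * f u) ≤ _ := step
      _ = _ := e1
      _ ≤ l1 h * S := mul_le_mul_of_nonneg_right (int_kernel_le_l1 hk le_rfl (by linarith)) hS
      _ = S * l1 h := mul_comm _ _
  have := conv_split hk hf hT₀ ht1
  linarith

lemma renewal_bdd (hk : KernelL1 h) (hf : Continuous f) (hf0 : ∀ u, 0 ≤ f u)
    {c C T : ℝ} (hc : 0 ≤ c) (hC : 0 ≤ C) (hT : 0 ≤ T) (hq : c * l1 h < 1)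
    (hineq : ∀ t, T ≤ t → f t ≤ C + c * convK h f t) :
    ∃ B, 0 ≤ B ∧ ∀ t, 0 ≤ t → f t ≤ B := by
  obtain ⟨t₁, ht₁mem, ht₁max⟩ :=
    isCompact_Icc.exists_isMaxOn (α := ℝ) (nonempty_Icc.2 hT) hf.continuousOn
  set q := c * l1 h with hqdef
  have hq1 : 0 < 1 - q := by linarith
  refine ⟨max (f t₁) (C / (1 - q)), le_max_of_le_left (hf0 t₁), fun t ht => ?_⟩
  obtain ⟨t₀, ht₀mem, ht₀max⟩ :=
    isCompact_Icc.exists_isMaxOn (α := ℝ) (nonempty_Icc.2 (le_trans hT (le_max_right t T)))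
      hf.continuousOn
  have hft : f t ≤ f t₀ := ht₀max ⟨ht, le_max_left t T⟩
  rcases le_or_gt t₀ T with hcase | hcase
  · exact le_trans hft (le_max_of_le_left (ht₁max ⟨ht₀mem.1, hcase⟩))
  · have hconv : convK h f t₀ ≤ f t₀ * l1 h := by
      apply conv_le_mul hk hf ?_ (hf0 t₀) (le_trans hT hcase.le)
      intro u hu
      exact ht₀max ⟨hu.1, le_trans hu.2 ht₀mem.2⟩
    have h1 : f t₀ ≤ C + c * (f t₀ * l1 h) :=
      le_trans (hineq t₀ hcase.le) (by nlinarith)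
    have h2 : f t₀ ≤ C / (1 - q) := by
      rw [le_div_iff₀ hq1]
      nlinarith
    exact le_trans hft (le_max_of_le_right h2)

lemma elimsup_le_of_ev {r : ℝ} (hev : ∀ᶠ t in atTop, f t ≤ r) :
    elimsup f ≤ ENNReal.ofReal r := by
  have : elimsup f ≤ Filter.limsup (fun _ : ℝ => ENNReal.ofReal r) atTop :=
    Filter.limsup_le_limsup (hev.mono fun t ht => ENNReal.ofReal_le_ofReal ht)
  simpa using this

lemma toReal_elimsup_le_of_ev {r : ℝ} (hr : 0 ≤ r) (hev : ∀ᶠ t in atTop, f t ≤ r) :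
    (elimsup f).toReal ≤ r := by
  have h' := elimsup_le_of_ev hev
  have := ENNReal.toReal_mono ENNReal.ofReal_ne_top h'
  rwa [ENNReal.toReal_ofReal hr] at this

lemma le_toReal_eliminf_of_ev {r : ℝ} (hfin : eliminf f ≠ ⊤) (hev : ∀ᶠ t in atTop, r ≤ f t) :
    r ≤ (eliminf f).toReal := by
  rcases le_or_gt r 0 with hr | hr
  · exact le_trans hr ENNReal.toReal_nonneg
  · have h1 : ENNReal.ofReal r ≤ eliminf f := by
      have : Filter.liminf (fun _ : ℝ => ENNReal.ofReal r) atTop ≤ eliminf f :=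
        Filter.liminf_le_liminf (hev.mono fun t ht => ENNReal.ofReal_le_ofReal ht)
      simpa using this
    have := ENNReal.toReal_mono hfin h1
    rwa [ENNReal.toReal_ofReal hr.le] at this

lemma toReal_eliminf_le_toReal_elimsup (hfin : elimsup f ≠ ⊤) :
    (eliminf f).toReal ≤ (elimsup f).toReal :=
  ENNReal.toReal_mono hfin Filter.liminf_le_limsup

lemma eliminf_ne_top_of_elimsup (hfin : elimsup f ≠ ⊤) : eliminf f ≠ ⊤ :=
  ne_top_of_le_ne_top hfin Filter.liminf_le_limsup

lemma ev_le_of_elimsup (hfin : elimsup f ≠ ⊤) {ε : ℝ} (hε : 0 < ε) :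
    ∀ᶠ t in atTop, f t ≤ (elimsup f).toReal + ε := by
  set M := (elimsup f).toReal with hM
  have hlt : elimsup f < ENNReal.ofReal (M + ε) := by
    rw [← ENNReal.ofReal_toReal hfin]
    exact (ENNReal.ofReal_lt_ofReal_iff (by positivity : (0:ℝ) < M + ε)).mpr (by linarith)
  have := Filter.eventually_lt_of_limsup_lt hlt
  exact this.mono fun t ht => by
    by_contra hcon
    push_neg at hcon
    exact absurd (ENNReal.ofReal_le_ofReal hcon.le) (not_le.2 ht)

lemma ev_gt_of_eliminf (hf0 : ∀ t, 0 ≤ f t) (hfin : eliminf f ≠ ⊤) {ε : ℝ} (hε : 0 < ε) :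
    ∀ᶠ t in atTop, (eliminf f).toReal - ε ≤ f t := by
  set m := (eliminf f).toReal with hm
  rcases le_or_gt m ε with hcase | hcase
  · exact Filter.Eventually.of_forall fun t => by have := hf0 t; linarith
  · have hlt : ENNReal.ofReal (m - ε) < eliminf f := by
      rw [← ENNReal.ofReal_toReal hfin]
      exact (ENNReal.ofReal_lt_ofReal_iff (by linarith)).mpr (by linarith)
    have := Filter.eventually_lt_of_lt_liminf hlt
    exact this.mono fun t ht => by
      by_contra hcon
      push_neg at hcon
      exact absurd (ENNReal.ofReal_le_ofReal hcon.le) (not_le.2 ht)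

lemma bdd_of_elimsup (hf : Continuous f) (hfin : elimsup f ≠ ⊤) :
    ∃ B, ∀ u, 0 ≤ u → f u ≤ B := by
  obtain ⟨T, hT⟩ := eventually_atTop.1 (ev_le_of_elimsup hfin one_pos)
  obtain ⟨t₁, ht₁mem, ht₁max⟩ :=
    isCompact_Icc.exists_isMaxOn (α := ℝ) (nonempty_Icc.2 (le_max_left 0 T)) hf.continuousOn
  refine ⟨max (f t₁) ((elimsup f).toReal + 1), fun u hu => ?_⟩
  rcases le_or_gt u (max 0 T) with hcase | hcase
  · exact le_max_of_le_left (ht₁max ⟨hu, hcase⟩)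
  · exact le_max_of_le_right (hT u (le_trans (le_max_right 0 T) hcase.le))

lemma limsup_le_renewal (hk : KernelL1 h) (hf : Continuous f) (hf0 : ∀ u, 0 ≤ f u)
    {c C : ℝ} (hc : 0 ≤ c) (hC : 0 ≤ C) (hq : c * l1 h < 1)
    (hineq : ∀ᶠ t in atTop, f t ≤ C + c * convK h f t) :
    elimsup f ≠ ⊤ ∧ (elimsup f).toReal * (1 - c * l1 h) ≤ C := by
  have hl1 := l1_nonneg hk
  obtain ⟨T, hT⟩ := eventually_atTop.1 hineq
  obtain ⟨B, hB0, hB⟩ := renewal_bdd hk hf hf0 hc hC (le_max_right T 0) hq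
    (fun t ht => hT t (le_trans (le_max_left _ _) ht))
  have hfin : elimsup f ≠ ⊤ := by
    refine ne_top_of_le_ne_top ENNReal.ofReal_ne_top (elimsup_le_of_ev (r := B) ?_)
    filter_upwards [eventually_ge_atTop (0:ℝ)] with t ht using hB t ht
  refine ⟨hfin, ?_⟩
  set M := (elimsup f).toReal with hMdef
  have hM0 : 0 ≤ M := ENNReal.toReal_nonneg
  have key : ∀ ε, 0 < ε → M ≤ C + c * l1 h * M + (c * l1 h + c) * ε := by
    intro ε hε
    obtain ⟨T₁, hT₁⟩ := eventually_atTop.1 (ev_le_of_elimsup hfin hε)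
    have hconv := conv_le_eventually hk hf hf0 (B := B) (S := M + ε) (T₀ := max T₁ 0)
      hB (by linarith) (le_max_right _ _)
      (fun u hu => hT₁ u (le_trans (le_max_left _ _) hu)) hε
    have hev2 : ∀ᶠ t in atTop, f t ≤ C + c * ((M + ε) * l1 h + ε) := by
      filter_upwards [hineq, hconv] with t h1 h2
      have := mul_le_mul_of_nonneg_left h2 hc
      linarith
    have hrhs : (0:ℝ) ≤ c * ((M + ε) * l1 h + ε) :=
      mul_nonneg hc (by nlinarith)
    have := toReal_elimsup_le_of_ev (by linarith) hev2
    nlinarith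
  have hfin2 : M ≤ C + c * l1 h * M := by
    apply le_of_forall_pos_le_add
    intro ε' hε'
    have hk0 : (0:ℝ) ≤ c * l1 h + c := by nlinarith
    have := key (ε' / (c * l1 h + c + 1)) (by positivity)
    have h2 : (c * l1 h + c) * (ε' / (c * l1 h + c + 1)) ≤ ε' := by
      rw [mul_comm, div_mul_eq_mul_div, div_le_iff₀ (by positivity)]
      nlinarith
    linarith
  nlinarith

lemma liminf_ge_renewal (hk : KernelL1 h) (hf : Continuous f) (hf0 : ∀ u, 0 ≤ f u)
    {c C : ℝ} (hc : 0 ≤ c) (hfin : eliminf f ≠ ⊤)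
    (hineq : ∀ᶠ t in atTop, C + c * convK h f t ≤ f t) :
    C + c * l1 h * (eliminf f).toReal ≤ (eliminf f).toReal := by
  have hl1 := l1_nonneg hk
  set m := (eliminf f).toReal with hmdef
  have hm0 : 0 ≤ m := ENNReal.toReal_nonneg
  have key : ∀ ε, 0 < ε → C + c * l1 h * m ≤ m + (c * l1 h + c) * ε := by
    intro ε hε
    obtain ⟨T₁, hT₁⟩ := eventually_atTop.1 (ev_gt_of_eliminf hf0 hfin hε)
    set r := max (m - ε) 0 with hrdef
    have hub : ∀ u, max T₁ 0 ≤ u → r ≤ f u := fun u hu =>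
      max_le (hT₁ u (le_trans (le_max_left _ _) hu)) (hf0 u)
    have hconv := conv_ge_eventually hk hf hf0 (le_max_right T₁ 0) hub hε
    have hev2 : ∀ᶠ t in atTop, C + c * (r * l1 h - ε) ≤ f t := by
      filter_upwards [hineq, hconv] with t h1 h2
      have := mul_le_mul_of_nonneg_left h2 hc
      linarith
    have hle := le_toReal_eliminf_of_ev hfin hev2
    have hr1 : m - ε ≤ r := le_max_left _ _
    have hr2 : r ≤ m := max_le (by linarith) hm0
    nlinarith [mul_nonneg (mul_nonneg hc hl1) (sub_nonneg.2 hr1)]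
  apply le_of_forall_pos_le_add
  intro ε' hε'
  have hk0 : (0:ℝ) ≤ c * l1 h + c := by nlinarith
  have := key (ε' / (c * l1 h + c + 1)) (by positivity)
  have h2 : (c * l1 h + c) * (ε' / (c * l1 h + c + 1)) ≤ ε' := by
    rw [mul_comm, div_mul_eq_mul_div, div_le_iff₀ (by positivity)]
    nlinarith
  linarith

lemma sconv_ge (hk : KernelL1 h) (hf : Continuous f) (hf0 : ∀ u, 0 ≤ f u)
    {β : ℝ} (hβ0 : 0 < β) (hβ1 : β ≤ 1) (hfin : eliminf f ≠ ⊤) {ε : ℝ} (hε : 0 < ε) :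
    ∀ᶠ t in atTop, max (β * l1 h * (eliminf f).toReal - ε) 0 ≤ β * convK h f t := by
  have hl1 := l1_nonneg hk
  set m := (eliminf f).toReal with hmdef
  have hm0 : 0 ≤ m := ENNReal.toReal_nonneg
  set ε₁ := ε / (β * l1 h + 1) with hε₁def
  have hε₁ : 0 < ε₁ := by positivity
  obtain ⟨T₁, hT₁⟩ := eventually_atTop.1 (ev_gt_of_eliminf hf0 hfin hε₁)
  set r := max (m - ε₁) 0 with hrdef
  have hub : ∀ u, max T₁ 0 ≤ u → r ≤ f u := fun u hu =>
    max_le (hT₁ u (le_trans (le_max_left _ _) hu)) (hf0 u)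
  have hconv := conv_ge_eventually hk hf hf0 (le_max_right T₁ 0) hub hε₁
  filter_upwards [hconv, eventually_ge_atTop (0:ℝ)] with t h1 h2
  have hcnn : 0 ≤ β * convK h f t := mul_nonneg hβ0.le (conv_nonneg hk hf0 h2)
  apply max_le _ hcnn
  have hmul := mul_le_mul_of_nonneg_left h1 hβ0.le
  have hr1 : m - ε₁ ≤ r := le_max_left _ _
  have hdenom : (β * l1 h + 1) * ε₁ = ε := by
    rw [hε₁def, mul_div_cancel₀]
    positivity
  nlinarith [mul_nonneg (mul_nonneg hβ0.le hl1) (sub_nonneg.2 hr1)]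

lemma sconv_le (hk : KernelL1 h) (hf : Continuous f) (hf0 : ∀ u, 0 ≤ f u)
    {β B : ℝ} (hβ0 : 0 < β) (hβ1 : β ≤ 1) (hB : ∀ u, 0 ≤ u → f u ≤ B)
    (hfin : elimsup f ≠ ⊤) {ε : ℝ} (hε : 0 < ε) :
    ∀ᶠ t in atTop, β * convK h f t ≤ β * l1 h * (elimsup f).toReal + ε := by
  have hl1 := l1_nonneg hk
  set M := (elimsup f).toReal with hMdef
  have hM0 : 0 ≤ M := ENNReal.toReal_nonneg
  set ε₁ := ε / (β * l1 h + 1) with hε₁def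
  have hε₁ : 0 < ε₁ := by positivity
  obtain ⟨T₁, hT₁⟩ := eventually_atTop.1 (ev_le_of_elimsup hfin hε₁)
  have hub : ∀ u, max T₁ 0 ≤ u → f u ≤ M + ε₁ := fun u hu =>
    hT₁ u (le_trans (le_max_left _ _) hu)
  have hconv := conv_le_eventually hk hf hf0 (B := B) (S := M + ε₁) (T₀ := max T₁ 0)
    hB (by linarith) (le_max_right _ _) hub hε₁
  filter_upwards [hconv] with t h1
  have hmul := mul_le_mul_of_nonneg_left h1 hβ0.le
  have hdenom : (β * l1 h + 1) * ε₁ = ε := by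
    rw [hε₁def, mul_div_cancel₀]
    positivity
  nlinarith

end ConvHelpers

/-- Auxiliary: `Ψ₁` as a function of the inner argument. -/
noncomputable def Fnn (muA k1 : ℝ) (PBA : ℝ → ℝ) (y : ℝ) : ℝ :=
  muA * PBA y / (1 - k1 * PBA y)

set_option maxHeartbeats 1000000 in
/-- If `liminf λ^B ∈ I_{κ₁,κ₂}` then `(liminf λ^B, limsup λ^B) ∈ U_Φ`; in
particular `limsup λ^B < ∞` and the chain of inequalities holds. -/
theorem stmt11
    (α : ℝ) (hα : α ∈ Set.Ioo (0:ℝ) 1)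
    (h₁ h₂ h₃ h₄ : ℝ → ℝ)
    (hh₁ : KernelOK h₁) (hh₂ : KernelOK h₂) (hh₃ : KernelOK h₃) (hh₄ : KernelOK h₄)
    (κ₁ κ₂ κ₃ κ₄ : ℝ)
    (hκ₁ : κ₁ = α * l1 h₁) (hκ₂ : κ₂ = (1 - α) * l1 h₂)
    (hκ₃ : κ₃ = (1 - α) * l1 h₃) (hκ₄ : κ₄ = α * l1 h₄)
    (ΦBA ΦAB : ℝ → ℝ) (hBA : InhibOK ΦBA) (hAB : FeedOK ΦAB)
    (μA μB : ℝ) (hμA : 0 < μA) (hμB : 0 ≤ μB)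
    (hk2 : 0 < κ₂) (hk4 : 0 < κ₄) (hk3 : κ₃ < 1)
    (ℓ : ℝ) (hℓmem : ℓ ∈ Idom κ₁ κ₂ ΦBA)
    (hℓfix : PhiMap μA μB κ₁ κ₂ κ₃ κ₄ ΦBA ΦAB ℓ = ℓ)
    (hℓuniq : ∀ x ∈ Idom κ₁ κ₂ ΦBA,
      PhiMap μA μB κ₁ κ₂ κ₃ κ₄ ΦBA ΦAB x = x → x = ℓ)
    (lA lB : ℝ → ℝ) (hsys : IsLinSys α h₁ h₂ h₃ h₄ ΦBA ΦAB μA μB lA lB)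
    (hIn : eliminf lB < ⊤ ∧ (eliminf lB).toReal ∈ Idom κ₁ κ₂ ΦBA) :
    elimsup lB < ⊤ ∧
    ((eliminf lB).toReal, (elimsup lB).toReal) ∈
      UPhi μA μB κ₁ κ₂ κ₃ κ₄ ΦBA ΦAB ℓ ∧
    PhiMap μA μB κ₁ κ₂ κ₃ κ₄ ΦBA ΦAB (elimsup lB).toReal ≤ (eliminf lB).toReal ∧
    (eliminf lB).toReal ≤ ℓ ∧ ℓ ≤ (elimsup lB).toReal ∧
    (elimsup lB).toReal ≤ PhiMap μA μB κ₁ κ₂ κ₃ κ₄ ΦBA ΦAB (eliminf lB).toReal ∧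
    μB / (1 - κ₃) ≤ (eliminf lB).toReal := by
  
  obtain ⟨hcA, hcB, hA0, hB0, heqA, heqB⟩ := hsys
  have hker1 := hh₁.1
  have hker2 := hh₂.1
  have hker3 := hh₃.1
  have hker4 := hh₄.1
  obtain ⟨⟨K, hK0, hKlip⟩, hBAanti, hBA1, hBAbd, _⟩ := hBA
  obtain ⟨⟨K', hK'0, hK'lip⟩, hABmono, hAB00, hABnn, _⟩ := hAB
  have hα0 : 0 < α := hα.1
  have hα1 : α < 1 := hα.2
  have h1α : 0 < 1 - α := by linarith only [hα1]
  have hκ₁0 : 0 ≤ κ₁ := by rw [hκ₁]; exact mul_nonneg hα0.le (l1_nonneg hker1)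
  have hκ₃0 : 0 ≤ κ₃ := by rw [hκ₃]; exact mul_nonneg h1α.le (l1_nonneg hker3)
  have h1κ₃ : 0 < 1 - κ₃ := by linarith only [hk3]
  obtain ⟨hfinB0, hmIdom⟩ := hIn
  have hmfin : eliminf lB ≠ ⊤ := hfinB0.ne
  set m := (eliminf lB).toReal with hmdef
  obtain ⟨hm0, hmlt⟩ := hmIdom
  have hBAnn : ∀ x : ℝ, 0 ≤ x → 0 ≤ ΦBA x := fun x hx => (hBAbd x hx).1
  have hBAlipOn : LipschitzOnWith (Real.toNNReal K) ΦBA (Ici 0) := by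
    rw [lipschitzOnWith_iff_dist_le_mul]
    intro x hx y hy
    rw [Real.dist_eq, Real.dist_eq]
    calc |ΦBA x - ΦBA y| ≤ K * |x - y| := hKlip x y hx hy
      _ ≤ (Real.toNNReal K : ℝ) * |x - y| := by
          apply mul_le_mul_of_nonneg_right _ (abs_nonneg _)
          rw [Real.coe_toNNReal']
          exact le_max_left _ _
  have hBAcont : ContinuousOn ΦBA (Ici 0) := hBAlipOn.continuousOn
  have hPsi1F : ∀ x : ℝ, Psi1 μA κ₁ κ₂ ΦBA x = Fnn μA κ₁ ΦBA (κ₂ * x) := fun x => rfl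
  have lowconv2 : ∀ δ : ℝ, 0 < δ →
      ∀ᶠ t in atTop, max (κ₂ * m - δ) 0 ≤ (1 - α) * convK h₂ lB t := by
    intro δ hδ
    have := sconv_ge hker2 hcB hB0 h1α (by linarith only [hα0]) hmfin hδ
    rw [hκ₂]
    exact this
  have hm20 : (0:ℝ) ≤ κ₂ * m := mul_nonneg hk2.le hm0
  have hdenm : 0 < 1 - κ₁ * ΦBA (κ₂ * m) := by linarith only [hmlt]
  have hcwm : Tendsto ΦBA (𝓝[Ici 0] (κ₂ * m)) (𝓝 (ΦBA (κ₂ * m))) := hBAcont _ hm20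
  have hFcwm : Tendsto (Fnn μA κ₁ ΦBA) (𝓝[Ici 0] (κ₂ * m)) (𝓝 (Fnn μA κ₁ ΦBA (κ₂ * m))) :=
    (tendsto_const_nhds.mul hcwm).div
      (tendsto_const_nhds.sub (tendsto_const_nhds.mul hcwm)) (ne_of_gt hdenm)
  have stepA : ∀ ε', 0 < ε' → elimsup lA ≠ ⊤ ∧ (elimsup lA).toReal ≤ Fnn μA κ₁ ΦBA (κ₂ * m) + ε' := by
    intro ε' hε'
    have hev1 : ∀ᶠ y in 𝓝[Ici 0] (κ₂ * m), κ₁ * ΦBA y < 1 :=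
      (tendsto_const_nhds.mul hcwm).eventually_lt_const hmlt
    have hev2 : ∀ᶠ y in 𝓝[Ici 0] (κ₂ * m), Fnn μA κ₁ ΦBA y < Fnn μA κ₁ ΦBA (κ₂ * m) + ε' :=
      hFcwm.eventually_lt_const (lt_add_of_pos_right _ hε')
    have htd : Tendsto (fun δ : ℝ => max (κ₂ * m - δ) 0) (𝓝[>] 0) (𝓝[Ici 0] (κ₂ * m)) := by
      rw [tendsto_nhdsWithin_iff]
      constructor
      · have hcont : Continuous (fun δ : ℝ => max (κ₂ * m - δ) 0) :=
          (continuous_const.sub continuous_id).max continuous_const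
        have h9 := hcont.tendsto 0
        rw [show max (κ₂ * m - 0) 0 = κ₂ * m by rw [sub_zero]; exact max_eq_left hm20] at h9
        exact h9.mono_left nhdsWithin_le_nhds
      · exact Filter.Eventually.of_forall fun δ => mem_Ici.2 (le_max_right _ _)
    obtain ⟨δ, hprop, hδpos⟩ :=
      ((htd.eventually (hev1.and hev2)).and eventually_mem_nhdsWithin).exists
    obtain ⟨hδ1, hδ2⟩ := hprop
    rw [mem_Ioi] at hδpos
    set y := max (κ₂ * m - δ) 0 with hydef
    have hy0 : (0:ℝ) ≤ y := le_max_right _ _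
    have hc0 : 0 ≤ ΦBA y := hBAnn y hy0
    have hevA : ∀ᶠ t in atTop, lA t ≤ μA * ΦBA y + α * ΦBA y * convK h₁ lA t := by
      filter_upwards [lowconv2 δ hδpos, eventually_ge_atTop (0:ℝ)] with t h1 h2
      have harg0 : 0 ≤ (1 - α) * convK h₂ lB t := mul_nonneg h1α.le (conv_nonneg hker2 hB0 h2)
      have hmono : ΦBA ((1 - α) * convK h₂ lB t) ≤ ΦBA y :=
        hBAanti (mem_Ici.2 hy0) (mem_Ici.2 harg0) h1
      have hfac0 : 0 ≤ μA + α * convK h₁ lA t :=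
        add_nonneg hμA.le (mul_nonneg hα0.le (conv_nonneg hker1 hA0 h2))
      calc lA t = (μA + α * convK h₁ lA t) * ΦBA ((1 - α) * convK h₂ lB t) := heqA t h2
        _ ≤ (μA + α * convK h₁ lA t) * ΦBA y := mul_le_mul_of_nonneg_left hmono hfac0
        _ = μA * ΦBA y + α * ΦBA y * convK h₁ lA t := by ring
    have he : α * ΦBA y * l1 h₁ = κ₁ * ΦBA y := by rw [hκ₁]; ring
    have hql : α * ΦBA y * l1 h₁ < 1 := by rw [he]; exact hδ1
    obtain ⟨hfinA, hbdA⟩ := limsup_le_renewal hker1 hcA hA0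
      (mul_nonneg hα0.le hc0) (mul_nonneg hμA.le hc0) hql hevA
    refine ⟨hfinA, ?_⟩
    have h1c : 0 < 1 - κ₁ * ΦBA y := by linarith only [hδ1]
    rw [he] at hbdA
    have hle : (elimsup lA).toReal ≤ Fnn μA κ₁ ΦBA y := by
      rw [show Fnn μA κ₁ ΦBA y = μA * ΦBA y / (1 - κ₁ * ΦBA y) from rfl]
      rw [le_div_iff₀ h1c]
      exact hbdA
    linarith only [hle, hδ2]
  obtain ⟨hfinA, -⟩ := stepA 1 one_pos
  set MA := (elimsup lA).toReal with hMAdef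
  have hMA0 : 0 ≤ MA := ENNReal.toReal_nonneg
  have hMAle : MA ≤ Psi1 μA κ₁ κ₂ ΦBA m := by
    rw [hPsi1F]
    exact le_of_forall_pos_le_add fun ε' hε' => (stepA ε' hε').2
  obtain ⟨BA, hBAbd'⟩ := bdd_of_elimsup hcA hfinA
  have hfinA' : eliminf lA ≠ ⊤ := eliminf_ne_top_of_elimsup hfinA
  set mA := (eliminf lA).toReal with hmAdef
  have hmA0 : 0 ≤ mA := ENNReal.toReal_nonneg
  have upconv4 : ∀ δ : ℝ, 0 < δ → ∀ᶠ t in atTop, α * convK h₄ lA t ≤ κ₄ * MA + δ := by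
    intro δ hδ
    have := sconv_le hker4 hcA hA0 hα0 hα1.le hBAbd' hfinA hδ
    rw [hκ₄]
    exact this
  have stepB : ∀ ε, 0 < ε → elimsup lB ≠ ⊤ ∧
      (elimsup lB).toReal * (1 - κ₃) ≤ μB + ΦAB (κ₄ * MA + ε) := by
    intro ε hε
    have htarg0 : (0:ℝ) ≤ κ₄ * MA + ε := by positivity
    have hevB : ∀ᶠ t in atTop, lB t ≤ (μB + ΦAB (κ₄ * MA + ε)) + (1 - α) * convK h₃ lB t := by
      filter_upwards [upconv4 ε hε, eventually_ge_atTop (0:ℝ)] with t h1 h2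
      have harg0 : 0 ≤ α * convK h₄ lA t := mul_nonneg hα0.le (conv_nonneg hker4 hA0 h2)
      have hmono : ΦAB (α * convK h₄ lA t) ≤ ΦAB (κ₄ * MA + ε) :=
        hABmono (mem_Ici.2 harg0) (mem_Ici.2 htarg0) h1
      have heq : lB t = (μB + (1 - α) * convK h₃ lB t) + ΦAB (α * convK h₄ lA t) := heqB t h2
      linarith only [heq, hmono]
    have hC0 : 0 ≤ μB + ΦAB (κ₄ * MA + ε) := add_nonneg hμB (hABnn _ htarg0)
    have hq3 : (1 - α) * l1 h₃ < 1 := by rw [← hκ₃]; exact hk3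
    obtain ⟨hfinB, hbd⟩ := limsup_le_renewal hker3 hcB hB0 h1α.le hC0 hq3 hevB
    refine ⟨hfinB, ?_⟩
    rw [hκ₃]
    exact hbd
  obtain ⟨hfinB, -⟩ := stepB 1 one_pos
  have hfinBlt : elimsup lB < ⊤ := lt_top_iff_ne_top.2 hfinB
  set M := (elimsup lB).toReal with hMdef
  have hM0 : 0 ≤ M := ENNReal.toReal_nonneg
  have hmM : m ≤ M := toReal_eliminf_le_toReal_elimsup hfinB
  obtain ⟨BB, hBBbd⟩ := bdd_of_elimsup hcB hfinB
  have hMle2 : M * (1 - κ₃) ≤ μB + ΦAB (κ₄ * MA) := by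
    apply le_of_forall_pos_le_add
    intro ε' hε'
    have hεpos : 0 < ε' / (K' + 1) := by positivity
    have hsb := (stepB (ε' / (K' + 1)) hεpos).2
    have hlip2 : ΦAB (κ₄ * MA + ε' / (K' + 1)) ≤ ΦAB (κ₄ * MA) + K' * (ε' / (K' + 1)) := by
      have habs := hK'lip (κ₄ * MA + ε' / (K' + 1)) (κ₄ * MA)
        (by positivity) (mul_nonneg hk4.le hMA0)
      have h3 := le_trans (le_abs_self _) habs
      rw [show |κ₄ * MA + ε' / (K' + 1) - κ₄ * MA| = ε' / (K' + 1) by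
        rw [add_sub_cancel_left]; exact abs_of_pos hεpos] at h3
      linarith only [h3]
    have hKe : K' * (ε' / (K' + 1)) ≤ ε' := by
      rw [mul_comm, div_mul_eq_mul_div, div_le_iff₀ (by positivity)]
      nlinarith only [hε', hK'0]
    linarith only [hsb, hlip2, hKe]
  have hΨ1m0 : 0 ≤ Psi1 μA κ₁ κ₂ ΦBA m :=
    div_nonneg (mul_nonneg hμA.le (hBAnn _ hm20)) hdenm.le
  have hMlePhim : M ≤ PhiMap μA μB κ₁ κ₂ κ₃ κ₄ ΦBA ΦAB m := by
    have hMleψ : M ≤ (μB + ΦAB (κ₄ * MA)) / (1 - κ₃) := by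
      rw [le_div_iff₀ h1κ₃]
      exact hMle2
    refine le_trans hMleψ ?_
    show (μB + ΦAB (κ₄ * MA)) / (1 - κ₃) ≤ (μB + ΦAB (κ₄ * Psi1 μA κ₁ κ₂ ΦBA m)) / (1 - κ₃)
    have h6 : ΦAB (κ₄ * MA) ≤ ΦAB (κ₄ * Psi1 μA κ₁ κ₂ ΦBA m) :=
      hABmono (mem_Ici.2 (mul_nonneg hk4.le hMA0))
        (mem_Ici.2 (mul_nonneg hk4.le hΨ1m0)) (mul_le_mul_of_nonneg_left hMAle hk4.le)
    have hnn := hABnn _ (mul_nonneg hk4.le hΨ1m0)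
    exact div_le_div₀ (by linarith only [hμB, hnn]) (by linarith only [h6]) h1κ₃ le_rfl
  have hm2M : κ₂ * m ≤ κ₂ * M := mul_le_mul_of_nonneg_left hmM hk2.le
  have hM20 : 0 ≤ κ₂ * M := le_trans hm20 hm2M
  have hBAmM : ΦBA (κ₂ * M) ≤ ΦBA (κ₂ * m) := hBAanti (mem_Ici.2 hm20) (mem_Ici.2 hM20) hm2M
  have hMlt : κ₁ * ΦBA (κ₂ * M) < 1 :=
    lt_of_le_of_lt (mul_le_mul_of_nonneg_left hBAmM hκ₁0) hmlt
  have hdenM : 0 < 1 - κ₁ * ΦBA (κ₂ * M) := by linarith only [hMlt]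
  have hcwM : Tendsto ΦBA (𝓝[Ici 0] (κ₂ * M)) (𝓝 (ΦBA (κ₂ * M))) := hBAcont _ hM20
  have hFcwM : Tendsto (Fnn μA κ₁ ΦBA) (𝓝[Ici 0] (κ₂ * M)) (𝓝 (Fnn μA κ₁ ΦBA (κ₂ * M))) :=
    (tendsto_const_nhds.mul hcwM).div
      (tendsto_const_nhds.sub (tendsto_const_nhds.mul hcwM)) (ne_of_gt hdenM)
  have upconv2 : ∀ δ : ℝ, 0 < δ → ∀ᶠ t in atTop, (1 - α) * convK h₂ lB t ≤ κ₂ * M + δ := by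
    intro δ hδ
    have := sconv_le hker2 hcB hB0 h1α (by linarith only [hα0]) hBBbd hfinB hδ
    rw [hκ₂]
    exact this
  have stepC : ∀ ε', 0 < ε' → Fnn μA κ₁ ΦBA (κ₂ * M) - ε' ≤ mA := by
    intro ε' hε'
    have hev2 : ∀ᶠ y in 𝓝[Ici 0] (κ₂ * M), Fnn μA κ₁ ΦBA (κ₂ * M) - ε' < Fnn μA κ₁ ΦBA y :=
      hFcwM.eventually_const_lt (sub_lt_self _ hε')
    have htd : Tendsto (fun δ : ℝ => κ₂ * M + δ) (𝓝[>] 0) (𝓝[Ici 0] (κ₂ * M)) := by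
      rw [tendsto_nhdsWithin_iff]
      constructor
      · have h9 : Tendsto (fun δ : ℝ => κ₂ * M + δ) (𝓝 0) (𝓝 (κ₂ * M + 0)) :=
          (continuous_const.add continuous_id).tendsto 0
        rw [show κ₂ * M + 0 = κ₂ * M from add_zero _] at h9
        exact h9.mono_left nhdsWithin_le_nhds
      · exact eventually_mem_nhdsWithin.mono fun δ hδ =>
          mem_Ici.2 (by have h10 := mem_Ioi.1 hδ; linarith only [h10, hM20])
    obtain ⟨δ, hδ2, hδpos⟩ := ((htd.eventually hev2).and eventually_mem_nhdsWithin).exists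
    rw [mem_Ioi] at hδpos
    set y := κ₂ * M + δ with hydef
    have hy0 : (0:ℝ) ≤ y := by rw [hydef]; linarith only [hδpos, hM20]
    have hyy : κ₂ * m ≤ y := by rw [hydef]; linarith only [hδpos, hm2M]
    have hcy0 : 0 ≤ ΦBA y := hBAnn y hy0
    have hylt : κ₁ * ΦBA y < 1 :=
      lt_of_le_of_lt
        (mul_le_mul_of_nonneg_left (hBAanti (mem_Ici.2 hm20) (mem_Ici.2 hy0) hyy) hκ₁0) hmlt
    have hevA' : ∀ᶠ t in atTop, μA * ΦBA y + α * ΦBA y * convK h₁ lA t ≤ lA t := by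
      filter_upwards [upconv2 δ hδpos, eventually_ge_atTop (0:ℝ)] with t h1 h2
      have harg0 : 0 ≤ (1 - α) * convK h₂ lB t := mul_nonneg h1α.le (conv_nonneg hker2 hB0 h2)
      have hmono : ΦBA y ≤ ΦBA ((1 - α) * convK h₂ lB t) :=
        hBAanti (mem_Ici.2 harg0) (mem_Ici.2 hy0) h1
      have hfac0 : 0 ≤ μA + α * convK h₁ lA t :=
        add_nonneg hμA.le (mul_nonneg hα0.le (conv_nonneg hker1 hA0 h2))
      calc μA * ΦBA y + α * ΦBA y * convK h₁ lA t
          = (μA + α * convK h₁ lA t) * ΦBA y := by ring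
        _ ≤ (μA + α * convK h₁ lA t) * ΦBA ((1 - α) * convK h₂ lB t) :=
            mul_le_mul_of_nonneg_left hmono hfac0
        _ = lA t := (heqA t h2).symm
    have hkey := liminf_ge_renewal hker1 hcA hA0 (mul_nonneg hα0.le hcy0) hfinA' hevA'
    have he : α * ΦBA y * l1 h₁ = κ₁ * ΦBA y := by rw [hκ₁]; ring
    rw [he] at hkey
    have hFy : Fnn μA κ₁ ΦBA y ≤ mA := by
      rw [show Fnn μA κ₁ ΦBA y = μA * ΦBA y / (1 - κ₁ * ΦBA y) from rfl]
      rw [div_le_iff₀ (by linarith only [hylt])]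
      nlinarith only [hkey]
    linarith only [hFy, hδ2]
  have hmAge : Psi1 μA κ₁ κ₂ ΦBA M ≤ mA := by
    rw [hPsi1F]
    exact le_of_forall_pos_le_add fun ε' hε' => by linarith only [stepC ε' hε']
  have lowconv4 : ∀ δ : ℝ, 0 < δ →
      ∀ᶠ t in atTop, max (κ₄ * mA - δ) 0 ≤ α * convK h₄ lA t := by
    intro δ hδ
    have := sconv_ge hker4 hcA hA0 hα0 hα1.le hfinA' hδ
    rw [hκ₄]
    exact this
  have hk4mA0 : 0 ≤ κ₄ * mA := mul_nonneg hk4.le hmA0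
  have stepD : μB + ΦAB (κ₄ * mA) + κ₃ * m ≤ m := by
    have key : ∀ ε : ℝ, 0 < ε → μB + ΦAB (κ₄ * mA) - K' * ε + κ₃ * m ≤ m := by
      intro ε hε
      have hevB' : ∀ᶠ t in atTop,
          (μB + ΦAB (κ₄ * mA) - K' * ε) + (1 - α) * convK h₃ lB t ≤ lB t := by
        filter_upwards [lowconv4 ε hε, eventually_ge_atTop (0:ℝ)] with t h1 h2
        have harg0 : 0 ≤ α * convK h₄ lA t := mul_nonneg hα0.le (conv_nonneg hker4 hA0 h2)
        have hyy0 : (0:ℝ) ≤ max (κ₄ * mA - ε) 0 := le_max_right _ _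
        have hmono : ΦAB (max (κ₄ * mA - ε) 0) ≤ ΦAB (α * convK h₄ lA t) :=
          hABmono (mem_Ici.2 hyy0) (mem_Ici.2 harg0) h1
        have habs := hK'lip (κ₄ * mA) (max (κ₄ * mA - ε) 0) hk4mA0 hyy0
        have h3 := le_trans (le_abs_self _) habs
        have hyle : max (κ₄ * mA - ε) 0 ≤ κ₄ * mA := max_le (by linarith) hk4mA0
        have h4 : |κ₄ * mA - max (κ₄ * mA - ε) 0| ≤ ε := by
          rw [abs_of_nonneg (by linarith only [hyle])]
          have h11 := le_max_left (κ₄ * mA - ε) (0:ℝ)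
          linarith only [h11]
        have h5 : ΦAB (κ₄ * mA) - K' * ε ≤ ΦAB (max (κ₄ * mA - ε) 0) := by
          linarith only [h3, mul_le_mul_of_nonneg_left h4 hK'0]
        have heq : lB t = (μB + (1 - α) * convK h₃ lB t) + ΦAB (α * convK h₄ lA t) := heqB t h2
        linarith only [heq, hmono, h5]
      have hlg := liminf_ge_renewal hker3 hcB hB0 h1α.le hmfin hevB'
      rw [show (1 - α) * l1 h₃ = κ₃ from hκ₃.symm] at hlg
      linarith only [hlg]
    apply le_of_forall_pos_le_add
    intro ε' hε'
    have hεpos : 0 < ε' / (K' + 1) := by positivity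
    have := key (ε' / (K' + 1)) hεpos
    have hKe : K' * (ε' / (K' + 1)) ≤ ε' := by
      rw [mul_comm, div_mul_eq_mul_div, div_le_iff₀ (by positivity)]
      nlinarith only [hε', hK'0]
    linarith only [this, hKe]
  have hmge : (μB + ΦAB (κ₄ * mA)) / (1 - κ₃) ≤ m := by
    rw [div_le_iff₀ h1κ₃]
    nlinarith only [stepD, hκ₃0, hm0]
  have hΨ1M0 : 0 ≤ Psi1 μA κ₁ κ₂ ΦBA M :=
    div_nonneg (mul_nonneg hμA.le (hBAnn _ hM20)) hdenM.le
  have hPhiM_le : PhiMap μA μB κ₁ κ₂ κ₃ κ₄ ΦBA ΦAB M ≤ m := by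
    refine le_trans ?_ hmge
    show (μB + ΦAB (κ₄ * Psi1 μA κ₁ κ₂ ΦBA M)) / (1 - κ₃) ≤ (μB + ΦAB (κ₄ * mA)) / (1 - κ₃)
    have h6 : ΦAB (κ₄ * Psi1 μA κ₁ κ₂ ΦBA M) ≤ ΦAB (κ₄ * mA) :=
      hABmono (mem_Ici.2 (mul_nonneg hk4.le hΨ1M0)) (mem_Ici.2 hk4mA0)
        (mul_le_mul_of_nonneg_left hmAge hk4.le)
    have hnn := hABnn _ hk4mA0
    exact div_le_div₀ (by linarith only [hμB, hnn]) (by linarith only [h6]) h1κ₃ le_rfl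
  have hμBm : μB / (1 - κ₃) ≤ m := by
    rw [div_le_iff₀ h1κ₃]
    have h12 := hABnn _ hk4mA0
    nlinarith only [stepD, h12, hκ₃0, hm0]
  have hMIdom : M ∈ Idom κ₁ κ₂ ΦBA := ⟨hM0, hMlt⟩
  have hPhiAnti : ∀ u v : ℝ, u ∈ Idom κ₁ κ₂ ΦBA → v ∈ Idom κ₁ κ₂ ΦBA → u ≤ v →
      PhiMap μA μB κ₁ κ₂ κ₃ κ₄ ΦBA ΦAB v ≤ PhiMap μA μB κ₁ κ₂ κ₃ κ₄ ΦBA ΦAB u := by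
    intro u v hu hv huv
    obtain ⟨hu0, hult⟩ := hu
    obtain ⟨hv0, hvlt⟩ := hv
    have hu20 : 0 ≤ κ₂ * u := mul_nonneg hk2.le hu0
    have hv20 : 0 ≤ κ₂ * v := mul_nonneg hk2.le hv0
    have h2uv : κ₂ * u ≤ κ₂ * v := mul_le_mul_of_nonneg_left huv hk2.le
    have hBAuv : ΦBA (κ₂ * v) ≤ ΦBA (κ₂ * u) := hBAanti (mem_Ici.2 hu20) (mem_Ici.2 hv20) h2uv
    have hdu : 0 < 1 - κ₁ * ΦBA (κ₂ * u) := by linarith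
    have hdv : 0 < 1 - κ₁ * ΦBA (κ₂ * v) := by
      linarith only [hvlt]
    have hψ : Psi1 μA κ₁ κ₂ ΦBA v ≤ Psi1 μA κ₁ κ₂ ΦBA u := by
      show μA * ΦBA (κ₂ * v) / (1 - κ₁ * ΦBA (κ₂ * v)) ≤
        μA * ΦBA (κ₂ * u) / (1 - κ₁ * ΦBA (κ₂ * u))
      exact div_le_div₀ (mul_nonneg hμA.le (hBAnn _ hu20))
        (mul_le_mul_of_nonneg_left hBAuv hμA.le) hdu
        (by linarith only [mul_le_mul_of_nonneg_left hBAuv hκ₁0])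
    have hψv0 : 0 ≤ Psi1 μA κ₁ κ₂ ΦBA v :=
      div_nonneg (mul_nonneg hμA.le (hBAnn _ hv20)) hdv.le
    show (μB + ΦAB (κ₄ * Psi1 μA κ₁ κ₂ ΦBA v)) / (1 - κ₃) ≤
      (μB + ΦAB (κ₄ * Psi1 μA κ₁ κ₂ ΦBA u)) / (1 - κ₃)
    have h7 : ΦAB (κ₄ * Psi1 μA κ₁ κ₂ ΦBA v) ≤ ΦAB (κ₄ * Psi1 μA κ₁ κ₂ ΦBA u) :=
      hABmono (mem_Ici.2 (mul_nonneg hk4.le hψv0))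
        (mem_Ici.2 (mul_nonneg hk4.le (le_trans hψv0 hψ)))
        (mul_le_mul_of_nonneg_left hψ hk4.le)
    have hnn := hABnn _ (mul_nonneg hk4.le (le_trans hψv0 hψ))
    exact div_le_div₀ (by linarith only [hμB, hnn]) (by linarith only [h7]) h1κ₃ le_rfl
  have hmℓ : m ≤ ℓ := by
    by_contra hcon
    push_neg at hcon
    have h8 := hPhiAnti ℓ m hℓmem ⟨hm0, hmlt⟩ hcon.le
    rw [hℓfix] at h8
    linarith only [h8, hMlePhim, hmM, hcon]
  have hℓM : ℓ ≤ M := by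
    by_contra hcon
    push_neg at hcon
    have h8 := hPhiAnti M ℓ hMIdom hℓmem hcon.le
    rw [hℓfix] at h8
    linarith only [h8, hPhiM_le, hmM, hcon]
  exact ⟨hfinBlt, ⟨⟨hm0, hmlt⟩, hMIdom, hPhiM_le, hmℓ, hℓM, hMlePhim, hμBm⟩,
    hPhiM_le, hmℓ, hℓM, hMlePhim, hμBm⟩
end

section
/- Suppose κ₃ < 1, κ₂ > 0, κ₄ > 0 and μ_A > 0, let ℓ be the unique fixed point of Φ in I_{κ₁,κ₂}, and suppose in addition that Φ is strictly decreasing on I_{κ₁,κ₂}. Let x* := inf I_{κ₁,κ₂} (with x* = 0 when κ₁ < 1). Then U_Φ = {(ℓ, ℓ)} if and only if u < Φ(Φ(u)) for every u in the open interval (max(x*, μ_B/(1−κ₃)), ℓ). -/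
open MeasureTheory Filter Topology Set
open scoped ENNReal

/-- When `Φ` is strictly decreasing on `I_{κ₁,κ₂}`, Assumption U holds iff
`u < Φ(Φ(u))` on the open interval `(max(x*, μ_B/(1-κ₃)), ℓ)`. -/
theorem stmt15
    (α : ℝ) (hα : α ∈ Set.Ioo (0:ℝ) 1)
    (h₁ h₂ h₃ h₄ : ℝ → ℝ)
    (hh₁ : KernelL1 h₁) (hh₂ : KernelL1 h₂) (hh₃ : KernelL1 h₃) (hh₄ : KernelL1 h₄)
    (κ₁ κ₂ κ₃ κ₄ : ℝ)
    (hκ₁ : κ₁ = α * l1 h₁) (hκ₂ : κ₂ = (1 - α) * l1 h₂)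
    (hκ₃ : κ₃ = (1 - α) * l1 h₃) (hκ₄ : κ₄ = α * l1 h₄)
    (ΦBA ΦAB : ℝ → ℝ) (hBA : InhibOK ΦBA) (hAB : FeedOK ΦAB)
    (μA μB : ℝ) (hμA : 0 < μA) (hμB : 0 ≤ μB)
    (hk2 : 0 < κ₂) (hk4 : 0 < κ₄) (hk3 : κ₃ < 1)
    (ℓ : ℝ) (hℓmem : ℓ ∈ Idom κ₁ κ₂ ΦBA)
    (hℓfix : PhiMap μA μB κ₁ κ₂ κ₃ κ₄ ΦBA ΦAB ℓ = ℓ)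
    (hℓuniq : ∀ x ∈ Idom κ₁ κ₂ ΦBA,
      PhiMap μA μB κ₁ κ₂ κ₃ κ₄ ΦBA ΦAB x = x → x = ℓ)
    (hstrict : StrictAntiOn (PhiMap μA μB κ₁ κ₂ κ₃ κ₄ ΦBA ΦAB)
      (Idom κ₁ κ₂ ΦBA)) :
    UPhi μA μB κ₁ κ₂ κ₃ κ₄ ΦBA ΦAB ℓ = {(ℓ, ℓ)} ↔
    ∀ u ∈ Set.Ioo (max (sInf (Idom κ₁ κ₂ ΦBA)) (μB / (1 - κ₃))) ℓ,
      u < PhiMap μA μB κ₁ κ₂ κ₃ κ₄ ΦBA ΦAB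
            (PhiMap μA μB κ₁ κ₂ κ₃ κ₄ ΦBA ΦAB u) := by
  obtain ⟨hk1L, hBAanti, hBA0, hBApos, _⟩ := hBA
  obtain ⟨_, hABmono, hAB0, hABpos, _⟩ := hAB
  set Φ := PhiMap μA μB κ₁ κ₂ κ₃ κ₄ ΦBA ΦAB with hΦdef
  set I := Idom κ₁ κ₂ ΦBA with hIdef
  have hk3' : 0 < 1 - κ₃ := by linarith
  have hk1nn : 0 ≤ κ₁ := by
    rw [hκ₁]
    exact mul_nonneg hα.1.le
      (setIntegral_nonneg measurableSet_Ioi (fun u hu => hh₁.2.1 u (le_of_lt hu)))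
  have hmemI : ∀ x : ℝ, x ∈ I ↔ 0 ≤ x ∧ κ₁ * ΦBA (κ₂ * x) < 1 := fun x => Iff.rfl
  -- I is upward closed
  have hup : ∀ x ∈ I, ∀ y : ℝ, x ≤ y → y ∈ I := by
    intro x hx y hxy
    rw [hmemI] at hx ⊢
    have hy0 : 0 ≤ y := hx.1.trans hxy
    have hmono : ΦBA (κ₂ * y) ≤ ΦBA (κ₂ * x) :=
      hBAanti (mul_nonneg hk2.le hx.1) (mul_nonneg hk2.le hy0)
        (by nlinarith)
    refine ⟨hy0, lt_of_le_of_lt ?_ hx.2⟩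
    exact mul_le_mul_of_nonneg_left hmono hk1nn
  -- Psi1 is nonnegative on I
  have hPsi1nn : ∀ y ∈ I, 0 ≤ Psi1 μA κ₁ κ₂ ΦBA y := by
    intro y hy
    rw [hmemI] at hy
    unfold Psi1
    apply div_nonneg
    · exact mul_nonneg hμA.le (hBApos _ (mul_nonneg hk2.le hy.1)).1
    · linarith [hy.2]
  -- lower bound on Φ
  have hPhiLB : ∀ y ∈ I, μB / (1 - κ₃) ≤ Φ y := by
    intro y hy
    have h1 : 0 ≤ ΦAB (κ₄ * Psi1 μA κ₁ κ₂ ΦBA y) :=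
      hABpos _ (mul_nonneg hk4.le (hPsi1nn y hy))
    have heq : Φ y = (μB + ΦAB (κ₄ * Psi1 μA κ₁ κ₂ ΦBA y)) / (1 - κ₃) := rfl
    rw [heq]
    exact (div_le_div_iff_of_pos_right hk3').mpr (by linarith)
  -- strict lower bound on Φ
  have hPhiGt : ∀ y ∈ I, μB / (1 - κ₃) < Φ y := by
    intro y hy
    have hy1 : y + 1 ∈ I := hup y hy (y + 1) (by linarith)
    calc μB / (1 - κ₃) ≤ Φ (y + 1) := hPhiLB _ hy1
      _ < Φ y := hstrict hy hy1 (by linarith)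
  -- positive members of I are strictly above sInf I
  have hmemIgt : ∀ u ∈ I, 0 < u → sInf I < u := by
    intro u hu hu0
    obtain ⟨K, hK0, hKlip⟩ := hk1L
    rw [hmemI] at hu
    set c : ℝ := 1 - κ₁ * ΦBA (κ₂ * u) with hc
    have hc0 : 0 < c := by rw [hc]; linarith [hu.2]
    set M : ℝ := κ₁ * K * κ₂ with hM
    have hM0 : 0 ≤ M := by positivity
    set ε : ℝ := min (u / 2) (c / (2 * (M + 1))) with hε
    have hε0 : 0 < ε := lt_min (by linarith) (by positivity)
    have hεu : ε ≤ u / 2 := min_le_left _ _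
    have hεc : ε ≤ c / (2 * (M + 1)) := min_le_right _ _
    set u' : ℝ := u - ε with hu'
    have hu'0 : 0 < u' := by rw [hu']; linarith
    have hlip := hKlip (κ₂ * u') (κ₂ * u) (mul_nonneg hk2.le hu'0.le)
      (mul_nonneg hk2.le hu0.le)
    have habs : |κ₂ * u' - κ₂ * u| = κ₂ * ε := by
      rw [hu']; rw [abs_of_nonpos (by nlinarith)]; ring
    rw [habs] at hlip
    have hBAle : ΦBA (κ₂ * u') ≤ ΦBA (κ₂ * u) + K * (κ₂ * ε) := by
      have := abs_sub_le_iff.mp hlip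
      linarith [this.1]
    have hu'I : u' ∈ I := by
      rw [hmemI]
      refine ⟨hu'0.le, ?_⟩
      have h1 : κ₁ * ΦBA (κ₂ * u') ≤ κ₁ * ΦBA (κ₂ * u) + M * ε := by
        have := mul_le_mul_of_nonneg_left hBAle hk1nn
        rw [hM]; nlinarith
      have h2 : M * ε ≤ c / 2 := by
        have hpos : (0:ℝ) < 2 * (M + 1) := by positivity
        have h2' : ε * (2 * (M + 1)) ≤ c := (le_div_iff₀ hpos).mp hεc
        rw [le_div_iff₀ (by norm_num : (0:ℝ) < 2)]
        nlinarith [hε0.le]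
      rw [hc] at h2
      linarith
    have : sInf I ≤ u' := csInf_le ⟨0, fun x hx => ((hmemI x).mp hx).1⟩ hu'I
    linarith
  constructor
  · -- U = {(ℓ,ℓ)} → condition
    intro hU u hu
    have huℓ : u < ℓ := hu.2
    have huInf : sInf I < u := lt_of_le_of_lt (le_max_left _ _) hu.1
    have huB : μB / (1 - κ₃) < u := lt_of_le_of_lt (le_max_right _ _) hu.1
    have huI : u ∈ I := by
      obtain ⟨x, hxI, hxu⟩ := exists_lt_of_csInf_lt ⟨ℓ, hℓmem⟩ huInf
      exact hup x hxI u hxu.le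
    by_contra hcon
    push_neg at hcon
    have hℓΦu : ℓ < Φ u := by
      have := hstrict huI hℓmem huℓ
      rwa [hℓfix] at this
    have hΦuI : Φ u ∈ I := hup ℓ hℓmem (Φ u) hℓΦu.le
    have hmem : (u, Φ u) ∈ UPhi μA μB κ₁ κ₂ κ₃ κ₄ ΦBA ΦAB ℓ :=
      ⟨huI, hΦuI, hcon, huℓ.le, hℓΦu.le, le_refl _, huB.le⟩
    rw [hU] at hmem
    have : u = ℓ := congrArg Prod.fst hmem
    linarith
  · -- condition → U = {(ℓ,ℓ)}
    intro hcond
    ext ⟨u, v⟩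
    simp only [UPhi, Set.mem_setOf_eq, Set.mem_singleton_iff, Prod.mk.injEq]
    constructor
    · rintro ⟨huI, hvI, h1, h2, h3, h4, h5⟩
      rcases eq_or_lt_of_le h2 with heq | hlt
      · refine ⟨heq, le_antisymm ?_ h3⟩
        calc v ≤ Φ u := h4
          _ = Φ ℓ := by rw [heq]
          _ = ℓ := hℓfix
      · exfalso
        have hΦuI : Φ u ∈ I := hup ℓ hℓmem _ (le_trans h3 h4)
        have hΦΦu : Φ (Φ u) ≤ u := by
          have := hstrict.antitoneOn hvI hΦuI h4
          exact le_trans this h1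
        have huB : μB / (1 - κ₃) < u := lt_of_lt_of_le (hPhiGt v hvI) h1
        have hu0 : 0 < u := lt_of_le_of_lt (div_nonneg hμB hk3'.le) huB
        have huInf : sInf I < u := hmemIgt u huI hu0
        have := hcond u ⟨max_lt huInf huB, hlt⟩
        linarith
    · rintro ⟨hu, hv⟩
      have hℓB : μB / (1 - κ₃) ≤ ℓ := by
        have := hPhiGt ℓ hℓmem
        rw [hℓfix] at this
        exact this.le
      rw [hu, hv]
      exact ⟨hℓmem, hℓmem, le_of_eq hℓfix, le_refl _, le_refl _,
        ge_of_eq hℓfix, hℓB⟩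
end
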